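/- Suppose α ∈ ℂ^{2N} is supported on Γ, f = Φα for a dictionary Φ ∈ ℂ^{N×2N}, the restricted matrix Φ_Γ (columns of Φ indexed by Γ) has full column rank, and there exists a dual vector S ∈ ℂ^N with (Φ*S)(γ) = sgn(α)(γ) for γ ∈ Γ and |(Φ*S)(γ)| < 1 for γ ∉ Γ. Then α is the unique minimizer of ‖β‖₁ subject to Φβ = f. -/

import Mathlib

open scoped Classical
open Matrix

/-- Strong-duality sufficient condition for exact `ℓ₁` recovery (Basis
Pursuit): if the restricted dictionary has full column rank and a dual vector
exists, then `α` is the unique `ℓ₁` minimizer among representations of `f`. -/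
theorem stmt_12 (N : ℕ) (Φ : Matrix (Fin N) (Fin (2 * N)) ℂ)
    (α : Fin (2 * N) → ℂ) (Γ : Finset (Fin (2 * N)))
    (hsupp : ∀ γ ∉ Γ, α γ = 0)
    (hrank : LinearIndependent ℂ (fun γ : Γ => fun i => Φ i (γ : Fin (2 * N))))
    (S : Fin N → ℂ)
    (hdual₁ : ∀ γ ∈ Γ, (Φᴴ *ᵥ S) γ =
      if α γ = 0 then 0 else α γ / (‖α γ‖ : ℂ))
    (hdual₂ : ∀ γ ∉ Γ, ‖(Φᴴ *ᵥ S) γ‖ < 1) :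
    ∀ β : Fin (2 * N) → ℂ, Φ *ᵥ β = Φ *ᵥ α → β ≠ α →
      ∑ γ, ‖α γ‖ < ∑ γ, ‖β γ‖ := by
  intro β hβ hne
  by_contra hcon
  push_neg at hcon
  set v : Fin (2 * N) → ℂ := Φᴴ *ᵥ S with hv
  -- |v γ| ≤ 1 everywhere
  have hvle : ∀ γ, ‖v γ‖ ≤ 1 := by
    intro γ
    by_cases hγ : γ ∈ Γ
    · rw [hdual₁ γ hγ]
      by_cases h0 : α γ = 0
      · simp [h0]
      · rw [if_neg h0, norm_div]
        simp only [Complex.norm_real]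
        rw [norm_norm, div_self (norm_ne_zero_iff.mpr h0)]
    · exact le_of_lt (hdual₂ γ hγ)
  -- key duality equality
  have hkey : star v ⬝ᵥ β = star v ⬝ᵥ α := by
    have hsv : star v = star S ᵥ* Φ := by
      rw [hv, star_mulVec, conjTranspose_conjTranspose]
    rw [hsv, ← dotProduct_mulVec, ← dotProduct_mulVec, hβ]
  -- real part on the α side is the ℓ¹ norm of α
  have hα : (star v ⬝ᵥ α).re = ∑ γ, ‖α γ‖ := by
    rw [dotProduct, Complex.re_sum]
    refine Finset.sum_congr rfl fun γ _ => ?_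
    by_cases hγ : γ ∈ Γ
    · by_cases h0 : α γ = 0
      · simp [h0]
      · have habs : (‖α γ‖ : ℝ) ≠ 0 := by
          simpa using h0
        rw [Pi.star_apply, hdual₁ γ hγ, if_neg h0, Complex.star_def, map_div₀,
          Complex.conj_ofReal, div_mul_eq_mul_div,
          mul_comm ((starRingEnd ℂ) (α γ)) (α γ), Complex.mul_conj,
          Complex.normSq_eq_norm_sq, ← Complex.ofReal_div, Complex.ofReal_re,
          sq, mul_div_assoc, div_self habs, mul_one]
    · simp [hsupp γ hγ]
  -- the β side is bounded by ∑ |v γ| |β γ|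
  have hβre : (star v ⬝ᵥ β).re ≤ ∑ γ, ‖v γ‖ * ‖β γ‖ := by
    rw [dotProduct, Complex.re_sum]
    refine Finset.sum_le_sum fun γ _ => ?_
    calc ((star v γ) * β γ).re ≤ ‖star v γ * β γ‖ := Complex.re_le_norm _
      _ = ‖v γ‖ * ‖β γ‖ := by
          rw [norm_mul]; simp
  have hchain : ∑ γ, ‖α γ‖ ≤ ∑ γ, ‖v γ‖ * ‖β γ‖ := by
    rw [← hα, ← hkey]; exact hβre
  -- β vanishes off Γ
  have hβ0 : ∀ γ ∉ Γ, β γ = 0 := by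
    intro γ₀ hγ₀
    by_contra hβγ
    have hstrict : ∑ γ, ‖v γ‖ * ‖β γ‖ < ∑ γ, ‖β γ‖ := by
      refine Finset.sum_lt_sum (fun γ _ => ?_) ⟨γ₀, Finset.mem_univ _, ?_⟩
      · exact mul_le_of_le_one_left (norm_nonneg _) (hvle γ)
      · exact mul_lt_of_lt_one_left (norm_pos_iff.mpr hβγ) (hdual₂ γ₀ hγ₀)
    linarith
  -- hence β = α by linear independence on Γ
  apply hne
  have hdiff : ∀ γ : Γ, β (γ : Fin (2 * N)) - α (γ : Fin (2 * N)) = 0 := by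
    refine Fintype.linearIndependent_iff.mp hrank
      (fun γ => β (γ : Fin (2 * N)) - α (γ : Fin (2 * N))) ?_
    funext i
    have h0 : ∑ γ, Φ i γ * (β γ - α γ) = 0 := by
      have := congrFun hβ i
      simp only [mulVec, dotProduct] at this
      simp [mul_sub, Finset.sum_sub_distrib, this]
    have hsub : ∑ γ : Γ, Φ i (γ : Fin (2 * N)) *
        (β (γ : Fin (2 * N)) - α (γ : Fin (2 * N))) = ∑ γ, Φ i γ * (β γ - α γ) := by
      rw [← Finset.sum_subtype Γ (fun _ => Iff.rfl) (fun γ => Φ i γ * (β γ - α γ))]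
      refine Finset.sum_subset (Finset.subset_univ _) fun γ _ hγ => ?_
      rw [hsupp γ hγ, hβ0 γ hγ, sub_zero, mul_zero]
    simpa [Finset.sum_apply, mul_comm] using hsub.trans h0
  funext γ
  by_cases hγ : γ ∈ Γ
  · have := hdiff ⟨γ, hγ⟩
    simpa [sub_eq_zero] using this
  · rw [hβ0 γ hγ, hsupp γ hγ]
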